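/- Let 2 ≤ p ≤ 4 and let δ₁, δ₂ > 0 satisfy 1 − 2/p ≤ δ₁ ≤ 1 and 1 − 2/p ≤ δ₂ ≤ 1. Let τ be a sequence in T(δ₁, δ₂) such that τ_n ≤ n for all n ≥ 1. Then E_p(τ) = Σ_{k=0}^∞ A_p(τ; k). -/

import Mathlib

open MeasureTheory Real Set

/-- The kernel `K_p(τ; x)`. -/
noncomputable def Kp (p : ℝ) (τ : ℕ → ℝ) (x : ℝ) : ℝ :=
  ∑' n : ℕ, (Set.Ioo (τ n) (τ (n + 1))).indicator
    (fun y => Real.sin (p / 2 * π * (y - n)) / (π * y)) x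

/-- The quantity `E_p(τ)`. -/
noncomputable def Ep (p : ℝ) (τ : ℕ → ℝ) : ℝ :=
  ∫ x in Set.Ioi (0 : ℝ), (max 0 (Kp p τ x)) ^ 2

/-- The set of sequences `T(δ₁, δ₂)`. -/
def Tset (δ₁ δ₂ : ℝ) : Set (ℕ → ℝ) :=
  {τ | τ 0 = 0 ∧ StrictMono τ ∧ δ₁ ≤ τ 1 ∧ ∀ n, 1 ≤ n → δ₂ ≤ τ (n + 1) - τ n}

/-- The supremum `ℰ_p(δ₁, δ₂) = sup_{τ ∈ T(δ₁,δ₂)} E_p(τ)`. -/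
noncomputable def Esup (p δ₁ δ₂ : ℝ) : ℝ := sSup (Ep p '' Tset δ₁ δ₂)

/-- The contribution `A_p(τ; k)` of the `k`-th ray (range `2 ≤ p ≤ 4`, with
`ϱ = 2 - 4/p` and `I_{k,j} = (k + jϱ, k + jϱ + 2/p)`). -/
noncomputable def Ap (p : ℝ) (τ : ℕ → ℝ) (k : ℕ) : ℝ :=
  ∑' j : ℕ,
    ∫ x in ((k : ℝ) + j * (2 - 4 / p))..((k : ℝ) + j * (2 - 4 / p) + 2 / p),
      (Set.Ioo (τ (k + 2 * j)) (τ (k + 2 * j + 1))).indicator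
        (fun y => Real.sin (p / 2 * π * (y - ((k : ℝ) + 2 * j))) ^ 2 / (π ^ 2 * y ^ 2)) x
open scoped ENNReal

noncomputable section Stmt12Aux

/-- auxiliary: the `n`-th interval. -/
def S12 (τ : ℕ → ℝ) (n : ℕ) : Set ℝ := Set.Ioo (τ n) (τ (n + 1))

/-- auxiliary: the `(n,j)`-th positivity window. -/
def W12 (p : ℝ) (n j : ℕ) : Set ℝ :=
  Set.Ioo ((n : ℝ) - 4 * j / p) ((n : ℝ) - 4 * j / p + 2 / p)

/-- auxiliary integrand. -/
def q12 (p : ℝ) (n : ℕ) (x : ℝ) : ℝ :=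
  Real.sin (p / 2 * π * (x - n)) ^ 2 / (π ^ 2 * x ^ 2)

/-- auxiliary elementary piece. -/
def X12 (p : ℝ) (τ : ℕ → ℝ) (n j : ℕ) : ℝ≥0∞ :=
  ∫⁻ x in S12 τ n ∩ W12 p n j, ENNReal.ofReal (q12 p n x)

lemma measurable_q12 (p : ℝ) (n : ℕ) : Measurable (q12 p n) := by
  unfold q12; fun_prop

lemma q12_nonneg (p : ℝ) (n : ℕ) (x : ℝ) : 0 ≤ q12 p n x := by
  unfold q12; positivity

lemma S12_pairwise (τ : ℕ → ℝ) (hm : StrictMono τ) :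
    Pairwise (Function.onFun Disjoint (S12 τ)) := by
  have key : ∀ a b : ℕ, a < b → Disjoint (S12 τ a) (S12 τ b) := by
    intro a b hab
    refine Set.disjoint_left.2 fun x hxa hxb => ?_
    have h1 : x < τ (a + 1) := hxa.2
    have h2 : τ b < x := hxb.1
    have : τ (a + 1) ≤ τ b := hm.monotone hab
    linarith
  intro a b hab
  rcases hab.lt_or_gt with h | h
  · exact key a b h
  · exact (key b a h).symm

lemma Kp_eq_on (p : ℝ) (τ : ℕ → ℝ) (hm : StrictMono τ) {n : ℕ} {x : ℝ}
    (hx : x ∈ S12 τ n) :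
    Kp p τ x = Real.sin (p / 2 * π * (x - n)) / (π * x) := by
  unfold Kp
  rw [tsum_eq_single n]
  · exact Set.indicator_of_mem hx _
  · intro m hmn
    apply Set.indicator_of_notMem
    exact fun hx' => Set.disjoint_left.1 (S12_pairwise τ hm hmn) hx' hx

lemma Kp_eq_zero (p : ℝ) (τ : ℕ → ℝ) {x : ℝ} (hx : ∀ n, x ∉ S12 τ n) :
    Kp p τ x = 0 := by
  unfold Kp
  have : ∀ n : ℕ, (Set.Ioo (τ n) (τ (n + 1))).indicator
      (fun y => Real.sin (p / 2 * π * (y - n)) / (π * y)) x = 0 :=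
    fun n => Set.indicator_of_notMem (hx n) _
  rw [tsum_congr this, tsum_zero]

end Stmt12Aux
section SinPos
open Real

lemma sin_pos_exists {θ : ℝ} (h : 0 < Real.sin θ) :
    ∃ m : ℤ, 2 * m * π < θ ∧ θ < 2 * m * π + π := by
  have h2π : 0 < 2 * π := by positivity
  set m : ℤ := ⌊θ / (2 * π)⌋ with hm
  have h0 : 0 ≤ θ - m * (2 * π) := Int.sub_floor_div_mul_nonneg θ h2π
  have h1 : θ - m * (2 * π) < 2 * π := Int.sub_floor_div_mul_lt θ h2π
  set r : ℝ := θ - m * (2 * π) with hr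
  have hsr : Real.sin r = Real.sin θ := by
    have := Real.sin_add_int_mul_two_pi r m
    rw [show r + m * (2 * π) = θ by rw [hr]; ring] at this; exact this.symm
  have hrpos : 0 < r := by
    rcases lt_or_eq_of_le h0 with h' | h'
    · exact h'
    · exfalso; rw [← h', Real.sin_zero] at hsr; linarith
  have hrpi : r < π := by
    by_contra hge
    push_neg at hge
    have : Real.sin r ≤ 0 := by
      have : Real.sin ((r - π) + π) = -Real.sin (r - π) := Real.sin_add_pi _
      have hnn : 0 ≤ Real.sin (r - π) :=
        Real.sin_nonneg_of_nonneg_of_le_pi (by linarith) (by linarith)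
      rw [show r = (r - π) + π by ring, this]
      linarith
    linarith
  exact ⟨m, by rw [hr] at hrpos hrpi; constructor <;> push_cast <;> nlinarith⟩

end SinPos
section WLemmas
open Real Set

variable {p : ℝ} {n i j : ℕ} {x : ℝ}

lemma W12_notmem (hp0 : 0 < p) (hij : i ≠ j) (hx : x ∈ W12 p n i) : x ∉ W12 p n j := by
  intro hx'
  have h4 : (0:ℝ) < 4 / p := by positivity
  have key : ∀ a b : ℕ, a < b → ((n:ℝ) - 4 * a / p) < ((n:ℝ) - 4 * b / p + 2 / p) → False := by
    intro a b hab hlt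
    have hab' : (a:ℝ) + 1 ≤ b := by exact_mod_cast hab
    have : 4 * ((a:ℝ) + 1) / p ≤ 4 * (b:ℝ) / p := by gcongr
    have h2 : (0:ℝ) < 2 / p := by positivity
    have e : 4 * ((a:ℝ) + 1) / p = 4 * (a:ℝ) / p + 4 / p := by ring
    have e2 : (4:ℝ) / p = 2 / p + 2 / p := by ring
    linarith
  rcases hij.lt_or_gt with h | h
  · exact key i j h (lt_trans hx.1 hx'.2)
  · exact key j i h (lt_trans hx'.1 hx.2)

lemma sin_pos_of_W (hp0 : 0 < p) (hx : x ∈ W12 p n j) :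
    0 < Real.sin (p / 2 * π * (x - n)) := by
  have hc : 0 < p / 2 * π := by positivity
  have e1 : p / 2 * π * (((n:ℝ) - 4 * j / p) - n) = -((j:ℝ) * (2 * π)) := by
    field_simp; ring
  have e2 : p / 2 * π * (((n:ℝ) - 4 * j / p + 2 / p) - n) = -((j:ℝ) * (2 * π)) + π := by
    field_simp; ring
  have l1 : -((j:ℝ) * (2 * π)) < p / 2 * π * (x - n) := by
    rw [← e1]; exact mul_lt_mul_of_pos_left (by linarith [hx.1]) hc
  have l2 : p / 2 * π * (x - n) < -((j:ℝ) * (2 * π)) + π := by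
    rw [← e2]; exact mul_lt_mul_of_pos_left (by linarith [hx.2]) hc
  have := Real.sin_pos_of_pos_of_lt_pi (x := p / 2 * π * (x - n) + (j:ℝ) * (2 * π))
    (by linarith) (by linarith)
  have hper := Real.sin_add_int_mul_two_pi (p / 2 * π * (x - n)) (j : ℤ)
  push_cast at hper
  rwa [hper] at this

lemma sin_nonpos_of_not_W (hp0 : 0 < p) (hxlt : x < (n:ℝ) + 4 / p)
    (h : ∀ j : ℕ, x ∉ W12 p n j) : Real.sin (p / 2 * π * (x - n)) ≤ 0 := by
  by_contra hpos
  push_neg at hpos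
  obtain ⟨m, h1, h2⟩ := sin_pos_exists hpos
  have hc : 0 < p / 2 * π := by positivity
  -- translate to x bounds
  have e1 : p / 2 * π * ((n:ℝ) + 4 * m / p - n) = 2 * m * π := by field_simp; ring
  have e2 : p / 2 * π * ((n:ℝ) + 4 * m / p + 2 / p - n) = 2 * m * π + π := by
    field_simp; ring
  have l1 : (n:ℝ) + 4 * m / p < x := by
    by_contra hle
    push_neg at hle
    have := mul_le_mul_of_nonneg_left (by linarith : x - n ≤ (n:ℝ) + 4 * m / p - n) hc.le
    rw [e1] at this; linarith
  have l2 : x < (n:ℝ) + 4 * m / p + 2 / p := by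
    by_contra hle
    push_neg at hle
    have := mul_le_mul_of_nonneg_left (by linarith : (n:ℝ) + 4 * m / p + 2 / p - n ≤ x - n) hc.le
    rw [e2] at this; linarith
  have hm0 : m ≤ 0 := by
    by_contra hm
    push_neg at hm
    have hm1 : (1:ℝ) ≤ (m:ℝ) := by exact_mod_cast hm
    have : 4 / p ≤ 4 * (m:ℝ) / p := by gcongr; linarith
    linarith
  refine h (-m).toNat ⟨?_, ?_⟩ <;>
    · have hcast : (((-m).toNat : ℕ) : ℝ) = -(m:ℝ) := by
        have := Int.toNat_of_nonneg (neg_nonneg.2 hm0)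
        exact_mod_cast congrArg (Int.cast : ℤ → ℝ) this
      rw [hcast]
      have e3 : 4 * -(m:ℝ) / p = -(4 * (m:ℝ) / p) := by ring
      rw [e3]
      linarith

end WLemmas
section TauLemmas
open Real Set

variable {p δ₁ δ₂ : ℝ} {τ : ℕ → ℝ}

lemma tau_lb (hτ1 : δ₁ ≤ τ 1) (hgap : ∀ n, 1 ≤ n → δ₂ ≤ τ (n + 1) - τ n) :
    ∀ n : ℕ, 1 ≤ n → δ₁ + ((n : ℝ) - 1) * δ₂ ≤ τ n := by
  intro n hn
  induction n with
  | zero => omega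
  | succ m ih =>
    rcases Nat.eq_or_lt_of_le hn with h | h
    · simp only [← h]; push_cast; linarith
    · have hm : 1 ≤ m := by omega
      have := hgap m hm
      have := ih hm
      push_cast
      push_cast at this
      linarith

lemma SW_empty (hp2 : 2 ≤ p) (hτ0 : τ 0 = 0) (hτ1 : δ₁ ≤ τ 1)
    (hgap : ∀ n, 1 ≤ n → δ₂ ≤ τ (n + 1) - τ n)
    (h1 : 1 - 2 / p ≤ δ₁) (h2 : 1 - 2 / p ≤ δ₂)
    {n j : ℕ} (hnj : n < 2 * j) : S12 τ n ∩ W12 p n j = ∅ := by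
  have hp0 : (0:ℝ) < p := by linarith
  rw [Set.eq_empty_iff_forall_notMem]
  rintro x ⟨hxS, hxW⟩
  have hxl : τ n < x := hxS.1
  have hxu : x < (n:ℝ) - 4 * j / p + 2 / p := hxW.2
  rcases Nat.eq_zero_or_pos n with h0 | hpos
  · subst h0
    rw [hτ0] at hxl
    have hj : 1 ≤ j := by omega
    have hj' : (1:ℝ) ≤ (j:ℝ) := by exact_mod_cast hj
    have : 4 / p ≤ 4 * (j:ℝ) / p := by gcongr; linarith
    have h2p : (0:ℝ) < 2 / p := by positivity
    have h4p : (0:ℝ) < 4 / p := by positivity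
    have e4 : (4:ℝ) / p = 2 / p + 2 / p := by ring
    simp only [Nat.cast_zero] at hxu
    linarith
  · have hlb := tau_lb hτ1 hgap n hpos
    have hn1 : (1:ℝ) ≤ (n:ℝ) := by exact_mod_cast hpos
    have hcast : (n:ℝ) + 1 ≤ 2 * (j:ℝ) := by exact_mod_cast hnj
    -- τ n ≥ n(1 - 2/p)
    have hτlb : (n:ℝ) * (1 - 2 / p) ≤ τ n := by nlinarith
    -- x < n - (4j-2)/p ≤ n(1-2/p)
    have hdiv : 2 * (n:ℝ) / p ≤ (4 * (j:ℝ) - 2) / p := by gcongr; linarith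
    have e : (n:ℝ) * (1 - 2 / p) = (n:ℝ) - 2 * (n:ℝ) / p := by ring
    have e2 : (n:ℝ) - 4 * (j:ℝ) / p + 2 / p = (n:ℝ) - (4 * (j:ℝ) - 2) / p := by ring
    linarith
end TauLemmas
section Pointwise
open Real Set MeasureTheory
open scoped ENNReal

variable {p δ₁ δ₂ : ℝ} {τ : ℕ → ℝ}

lemma measurableSet_S12 (τ : ℕ → ℝ) (n : ℕ) : MeasurableSet (S12 τ n) := measurableSet_Ioo

lemma measurableSet_W12 (p : ℝ) (n j : ℕ) : MeasurableSet (W12 p n j) := measurableSet_Ioo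

lemma pointwise_on_S (hp2 : 2 ≤ p) (hp4 : p ≤ 4) (hτ0 : τ 0 = 0)
    (hm : StrictMono τ) (hτn : ∀ n : ℕ, 1 ≤ n → τ n ≤ n)
    {n : ℕ} {x : ℝ} (hx : x ∈ S12 τ n) :
    ENNReal.ofReal ((max 0 (Real.sin (p / 2 * π * (x - n)) / (π * x))) ^ 2)
      = ∑' j : ℕ, (W12 p n j).indicator (fun y => ENNReal.ofReal (q12 p n y)) x := by
  have hp0 : (0:ℝ) < p := by linarith
  have hτn0 : (0:ℝ) ≤ τ n := by rw [← hτ0]; exact hm.monotone (Nat.zero_le n)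
  have hx0 : 0 < x := lt_of_le_of_lt hτn0 hx.1
  have hxlt : x < (n:ℝ) + 4 / p := by
    have h1 : τ (n + 1) ≤ ((n + 1 : ℕ) : ℝ) := hτn (n + 1) (by omega)
    have h2 : (1:ℝ) ≤ 4 / p := (one_le_div hp0).2 hp4
    have := hx.2
    push_cast at h1
    linarith
  have hπx : 0 < π * x := by positivity
  by_cases hW : ∃ j : ℕ, x ∈ W12 p n j
  · obtain ⟨j0, hj0⟩ := hW
    rw [tsum_eq_single j0 (fun j hj => Set.indicator_of_notMem
      (W12_notmem hp0 (Ne.symm hj) hj0) _)]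
    rw [Set.indicator_of_mem hj0]
    congr 1
    have hsin := sin_pos_of_W hp0 hj0
    rw [max_eq_right (le_of_lt (div_pos hsin hπx))]
    unfold q12
    rw [div_pow, mul_pow]
  · push_neg at hW
    have hsin := sin_nonpos_of_not_W hp0 hxlt hW
    have hdiv : Real.sin (p / 2 * π * (x - n)) / (π * x) ≤ 0 :=
      div_nonpos_of_nonpos_of_nonneg hsin hπx.le
    rw [max_eq_left hdiv]
    have : ∀ j : ℕ, (W12 p n j).indicator (fun y => ENNReal.ofReal (q12 p n y)) x = 0 :=
      fun j => Set.indicator_of_notMem (hW j) _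
    rw [tsum_congr this, tsum_zero]
    simp

lemma lint_S_eq (hp2 : 2 ≤ p) (hp4 : p ≤ 4) (hτ0 : τ 0 = 0)
    (hm : StrictMono τ) (hτn : ∀ n : ℕ, 1 ≤ n → τ n ≤ n) (n : ℕ) :
    ∫⁻ x in S12 τ n, ENNReal.ofReal ((max 0 (Kp p τ x)) ^ 2)
      = ∑' j : ℕ, X12 p τ n j := by
  have hcongr : ∀ x ∈ S12 τ n, ENNReal.ofReal ((max 0 (Kp p τ x)) ^ 2)
      = ∑' j : ℕ, (W12 p n j).indicator (fun y => ENNReal.ofReal (q12 p n y)) x := by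
    intro x hx
    rw [Kp_eq_on p τ hm hx]
    exact pointwise_on_S hp2 hp4 hτ0 hm hτn hx
  rw [setLIntegral_congr_fun (measurableSet_S12 τ n) hcongr]
  rw [lintegral_tsum (fun j => (Measurable.indicator
    ((measurable_q12 p n).ennreal_ofReal) (measurableSet_W12 p n j)).aemeasurable)]
  refine tsum_congr fun j => ?_
  rw [lintegral_indicator (measurableSet_W12 p n j),
    Measure.restrict_restrict (measurableSet_W12 p n j)]
  unfold X12
  rw [Set.inter_comm]

lemma lint_total (hp2 : 2 ≤ p) (hp4 : p ≤ 4) (hτ0 : τ 0 = 0)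
    (hm : StrictMono τ) (hτn : ∀ n : ℕ, 1 ≤ n → τ n ≤ n) :
    ∫⁻ x in Set.Ioi (0:ℝ), ENNReal.ofReal ((max 0 (Kp p τ x)) ^ 2)
      = ∑' n : ℕ, ∑' j : ℕ, X12 p τ n j := by
  set F : ℝ → ℝ≥0∞ := fun x => ENNReal.ofReal ((max 0 (Kp p τ x)) ^ 2) with hF
  have hSsub : (⋃ n, S12 τ n) ⊆ Set.Ioi (0:ℝ) := by
    rintro x hx
    simp only [Set.mem_iUnion] at hx
    obtain ⟨n, hn⟩ := hx
    have : (0:ℝ) ≤ τ n := by rw [← hτ0]; exact hm.monotone (Nat.zero_le n)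
    exact lt_of_le_of_lt this hn.1
  have hUmeas : MeasurableSet (⋃ n, S12 τ n) := MeasurableSet.iUnion fun n => measurableSet_S12 τ n
  have hind : ∀ x, F x = (⋃ n, S12 τ n).indicator F x := by
    intro x
    by_cases hx : x ∈ ⋃ n, S12 τ n
    · rw [Set.indicator_of_mem hx]
    · rw [Set.indicator_of_notMem hx]
      simp only [Set.mem_iUnion, not_exists] at hx
      rw [hF]
      simp only [Kp_eq_zero p τ hx, max_self]
      norm_num
  calc ∫⁻ x in Set.Ioi (0:ℝ), F x
      = ∫⁻ x in Set.Ioi (0:ℝ), (⋃ n, S12 τ n).indicator F x := lintegral_congr hind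
    _ = ∫⁻ x in (⋃ n, S12 τ n) ∩ Set.Ioi (0:ℝ), F x := by
        rw [lintegral_indicator hUmeas, Measure.restrict_restrict hUmeas]
    _ = ∫⁻ x in ⋃ n, S12 τ n, F x := by
        rw [Set.inter_eq_self_of_subset_left hSsub]
    _ = ∑' n : ℕ, ∫⁻ x in S12 τ n, F x :=
        lintegral_iUnion (fun n => measurableSet_S12 τ n) (S12_pairwise τ hm) F
    _ = ∑' n : ℕ, ∑' j : ℕ, X12 p τ n j :=
        tsum_congr fun n => lint_S_eq hp2 hp4 hτ0 hm hτn n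

end Pointwise
section EpToReal
open Real Set MeasureTheory
open scoped ENNReal

variable {p δ₁ δ₂ : ℝ} {τ : ℕ → ℝ}

lemma Ep_eq_toReal (hm : StrictMono τ) :
    Ep p τ = (∫⁻ x in Set.Ioi (0:ℝ),
      ENNReal.ofReal ((max 0 (Kp p τ x)) ^ 2)).toReal := by
  set G : ℝ → ℝ≥0∞ := fun x => ∑' n : ℕ, (S12 τ n).indicator
    (fun y => ENNReal.ofReal ((max 0 (Real.sin (p / 2 * π * (y - n)) / (π * y))) ^ 2)) x with hG
  have hGmeas : Measurable G := by
    apply Measurable.ennreal_tsum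
    intro n
    exact Measurable.indicator
      ((by fun_prop : Measurable fun y : ℝ =>
        (max 0 (Real.sin (p / 2 * π * (y - (n:ℝ))) / (π * y))) ^ 2).ennreal_ofReal)
      (measurableSet_S12 τ n)
  have hGeq : ∀ x, ENNReal.ofReal ((max 0 (Kp p τ x)) ^ 2) = G x := by
    intro x
    by_cases hx : ∃ n, x ∈ S12 τ n
    · obtain ⟨n, hn⟩ := hx
      rw [Kp_eq_on p τ hm hn]
      show _ = ∑' m : ℕ, (S12 τ m).indicator
        (fun y => ENNReal.ofReal ((max 0 (Real.sin (p / 2 * π * (y - m)) / (π * y))) ^ 2)) x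
      rw [tsum_eq_single n (fun m hmn => Set.indicator_of_notMem
        (fun hx' => Set.disjoint_left.1 (S12_pairwise τ hm hmn) hx' hn) _)]
      rw [Set.indicator_of_mem hn]
    · push_neg at hx
      rw [Kp_eq_zero p τ hx]
      show _ = ∑' n : ℕ, (S12 τ n).indicator
        (fun y => ENNReal.ofReal ((max 0 (Real.sin (p / 2 * π * (y - n)) / (π * y))) ^ 2)) x
      have : ∀ n : ℕ, (S12 τ n).indicator
          (fun y => ENNReal.ofReal ((max 0 (Real.sin (p / 2 * π * (y - n)) / (π * y))) ^ 2)) x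
          = 0 := fun n => Set.indicator_of_notMem (hx n) _
      rw [tsum_congr this, tsum_zero]
      simp
  have hf : (fun x => (max 0 (Kp p τ x)) ^ 2) = fun x => (G x).toReal :=
    funext fun x => by rw [← hGeq x, ENNReal.toReal_ofReal (sq_nonneg _)]
  unfold Ep
  rw [integral_eq_lintegral_of_nonneg_ae (ae_of_all _ fun x => sq_nonneg _)
    (by rw [hf]; exact hGmeas.ennreal_toReal.aestronglyMeasurable)]

lemma lint_total_fin (hp2 : 2 ≤ p) (hδ1pos : 0 < δ₁) (hτ0 : τ 0 = 0)
    (hm : StrictMono τ) (hτ1 : δ₁ ≤ τ 1) :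
    ∫⁻ x in Set.Ioi (0:ℝ), ENNReal.ofReal ((max 0 (Kp p τ x)) ^ 2) ≠ ⊤ := by
  have hp0 : (0:ℝ) < p := by linarith
  set Q : ℝ → ℝ := fun x => if x ≤ δ₁ then (p / 2) ^ 2 else (π ^ 2 * x ^ 2)⁻¹ with hQ
  have hQmeas : Measurable Q := by
    apply Measurable.ite (measurableSet_le measurable_id measurable_const) <;> fun_prop
  have hbound : ∀ x ∈ Set.Ioi (0:ℝ),
      ENNReal.ofReal ((max 0 (Kp p τ x)) ^ 2) ≤ ENNReal.ofReal (Q x) := by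
    intro x hx0
    by_cases hx : ∃ n, x ∈ S12 τ n
    · obtain ⟨n, hn⟩ := hx
      apply ENNReal.ofReal_le_ofReal
      rw [Kp_eq_on p τ hm hn]
      set t := Real.sin (p / 2 * π * (x - n)) / (π * x) with ht
      have hmaxsq : (max 0 t) ^ 2 ≤ t ^ 2 := by
        rcases le_total t 0 with h | h
        · rw [max_eq_left h]; simpa using sq_nonneg t
        · rw [max_eq_right h]
      have hxpos : (0:ℝ) < x := hx0
      have htsq : t ^ 2 = Real.sin (p / 2 * π * (x - n)) ^ 2 / (π ^ 2 * x ^ 2) := by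
        rw [ht, div_pow, mul_pow]
      by_cases hxd : x ≤ δ₁
      · have hn0 : n = 0 := by
          by_contra hne
          have h1n : 1 ≤ n := Nat.one_le_iff_ne_zero.2 hne
          have : δ₁ ≤ τ n := le_trans hτ1 (hm.monotone h1n)
          have := hn.1
          linarith
      -- n = 0 : use |sin y| ≤ |y|
        subst hn0
        rw [hQ]; simp only [if_pos hxd]
        have hsin : Real.sin (p / 2 * π * (x - (0:ℕ))) ^ 2 ≤ (p / 2 * π * (x - (0:ℕ))) ^ 2 :=
          Real.sin_sq_le_sq
        have harg : (p / 2 * π * (x - ((0:ℕ):ℝ))) ^ 2 = (p / 2) ^ 2 * (π ^ 2 * x ^ 2) := by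
          push_cast; ring
        calc (max 0 t) ^ 2 ≤ t ^ 2 := hmaxsq
          _ = Real.sin (p / 2 * π * (x - (0:ℕ))) ^ 2 / (π ^ 2 * x ^ 2) := htsq
          _ ≤ (p / 2) ^ 2 := by
              rw [div_le_iff₀ (by positivity)]
              rw [harg] at hsin
              linarith
      · rw [hQ]; simp only [if_neg hxd]
        calc (max 0 t) ^ 2 ≤ t ^ 2 := hmaxsq
          _ = Real.sin (p / 2 * π * (x - n)) ^ 2 / (π ^ 2 * x ^ 2) := htsq
          _ ≤ 1 / (π ^ 2 * x ^ 2) := by gcongr; exact Real.sin_sq_le_one _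
          _ = (π ^ 2 * x ^ 2)⁻¹ := one_div _
    · push_neg at hx
      rw [Kp_eq_zero p τ hx]
      simp only [max_self]
      norm_num
  have hQint : IntegrableOn Q (Set.Ioi (0:ℝ)) := by
    have hsplit : Set.Ioc (0:ℝ) δ₁ ∪ Set.Ioi δ₁ = Set.Ioi (0:ℝ) :=
      Set.Ioc_union_Ioi_eq_Ioi hδ1pos.le
    rw [← hsplit]
    apply MeasureTheory.IntegrableOn.union
    · have hconst : IntegrableOn (fun _ : ℝ => (p / 2) ^ 2) (Set.Ioc (0:ℝ) δ₁) volume :=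
        integrableOn_const measure_Ioc_lt_top.ne (by simp)
      refine hconst.congr_fun ?_ measurableSet_Ioc
      intro x hx
      rw [hQ]; simp only [if_pos hx.2]
    · have hbase : IntegrableOn (fun x : ℝ => x ^ (-2 : ℝ)) (Set.Ioi δ₁) :=
        integrableOn_Ioi_rpow_of_lt (by norm_num) hδ1pos
      refine MeasureTheory.IntegrableOn.congr_fun (hbase.const_mul ((π ^ 2)⁻¹)) ?_
        measurableSet_Ioi
      intro x hx
      have hx0 : (0:ℝ) < x := lt_trans hδ1pos hx
      have hrp : x ^ (-2 : ℝ) = (x ^ 2)⁻¹ := by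
        rw [show (-2:ℝ) = -((2:ℕ):ℝ) by norm_num, Real.rpow_neg hx0.le, Real.rpow_natCast]
      rw [hQ]
      simp only [if_neg (not_le.2 (Set.mem_Ioi.1 hx)), hrp, mul_inv]
  refine ne_of_lt ?_
  calc ∫⁻ x in Set.Ioi (0:ℝ), ENNReal.ofReal ((max 0 (Kp p τ x)) ^ 2)
      ≤ ∫⁻ x in Set.Ioi (0:ℝ), ENNReal.ofReal (Q x) :=
        setLIntegral_mono hQmeas.ennreal_ofReal hbound
    _ < ⊤ := hQint.lintegral_lt_top

end EpToReal
section Final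
open Real Set MeasureTheory
open scoped ENNReal

variable {p δ₁ δ₂ : ℝ} {τ : ℕ → ℝ}

lemma Ap_term (hp2 : 2 ≤ p) (k j : ℕ) :
    (∫ x in ((k : ℝ) + j * (2 - 4 / p))..((k : ℝ) + j * (2 - 4 / p) + 2 / p),
      (Set.Ioo (τ (k + 2 * j)) (τ (k + 2 * j + 1))).indicator
        (fun y => Real.sin (p / 2 * π * (y - ((k : ℝ) + 2 * j))) ^ 2 / (π ^ 2 * y ^ 2)) x)
      = (X12 p τ (k + 2 * j) j).toReal := by
  have hp0 : (0:ℝ) < p := by linarith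
  set a : ℝ := (k : ℝ) + j * (2 - 4 / p) with ha
  have hab : a ≤ a + 2 / p := le_add_of_nonneg_right (by positivity)
  have hW : Set.Ioo a (a + 2 / p) = W12 p (k + 2 * j) j := by
    unfold W12
    congr 1 <;> · rw [ha]; push_cast; ring
  have hcast : ((k + 2 * j : ℕ) : ℝ) = (k : ℝ) + 2 * j := by push_cast; ring
  have hfun : (Set.Ioo (τ (k + 2 * j)) (τ (k + 2 * j + 1))).indicator
      (fun y => Real.sin (p / 2 * π * (y - ((k : ℝ) + 2 * j))) ^ 2 / (π ^ 2 * y ^ 2))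
      = (S12 τ (k + 2 * j)).indicator (q12 p (k + 2 * j)) := by
    have : ∀ y : ℝ, Real.sin (p / 2 * π * (y - ((k : ℝ) + 2 * j))) ^ 2 / (π ^ 2 * y ^ 2)
        = q12 p (k + 2 * j) y := by
      intro y; unfold q12; rw [hcast]
    unfold S12
    simp only [this]
  rw [intervalIntegral.integral_of_le hab, MeasureTheory.integral_Ioc_eq_integral_Ioo, hfun,
    MeasureTheory.setIntegral_indicator (measurableSet_S12 τ _), hW]
  rw [integral_eq_lintegral_of_nonneg_ae (ae_of_all _ fun x => q12_nonneg p _ x)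
    ((measurable_q12 p _).aestronglyMeasurable)]
  unfold X12
  rw [Set.inter_comm]

lemma reindex12 (hp2 : 2 ≤ p) (hτ0 : τ 0 = 0) (hτ1 : δ₁ ≤ τ 1)
    (hgap : ∀ n, 1 ≤ n → δ₂ ≤ τ (n + 1) - τ n)
    (h1 : 1 - 2 / p ≤ δ₁) (h2 : 1 - 2 / p ≤ δ₂) :
    ∑' n : ℕ, ∑' j : ℕ, X12 p τ n j = ∑' k : ℕ, ∑' j : ℕ, X12 p τ (k + 2 * j) j := by
  rw [ENNReal.tsum_comm]
  rw [show (∑' k : ℕ, ∑' j : ℕ, X12 p τ (k + 2 * j) j)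
      = ∑' j : ℕ, ∑' k : ℕ, X12 p τ (k + 2 * j) j from ENNReal.tsum_comm]
  refine tsum_congr fun j => ?_
  have hinj : Function.Injective (fun k : ℕ => k + 2 * j) := add_left_injective (2 * j)
  have hsupp : Function.support (fun n : ℕ => X12 p τ n j) ⊆
      Set.range (fun k : ℕ => k + 2 * j) := by
    intro n hn
    by_contra hr
    apply hn
    have hlt : n < 2 * j := by
      by_contra hge
      exact hr ⟨n - 2 * j, show n - 2 * j + 2 * j = n by omega⟩
    have hempty := SW_empty hp2 hτ0 hτ1 hgap h1 h2 hlt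
    show X12 p τ n j = 0
    unfold X12
    rw [hempty]
    simp
  exact (hinj.tsum_eq hsupp).symm

end Final
theorem stmt12 (p δ₁ δ₂ : ℝ) (hp2 : 2 ≤ p) (hp4 : p ≤ 4)
    (hδ1pos : 0 < δ₁) (hδ2pos : 0 < δ₂)
    (h1 : 1 - 2 / p ≤ δ₁) (h1' : δ₁ ≤ 1) (h2 : 1 - 2 / p ≤ δ₂) (h2' : δ₂ ≤ 1)
    (τ : ℕ → ℝ) (hτ : τ ∈ Tset δ₁ δ₂) (hτn : ∀ n : ℕ, 1 ≤ n → τ n ≤ n) :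
    Ep p τ = ∑' k : ℕ, Ap p τ k := by
  obtain ⟨hτ0, hm, hτ1, hgap⟩ := hτ
  have hfin := lint_total_fin hp2 hδ1pos hτ0 hm hτ1
  have htot := lint_total hp2 hp4 hτ0 hm hτn
  set L : ENNReal := ∑' n : ℕ, ∑' j : ℕ, X12 p τ n j with hL
  have hLfin : L ≠ ⊤ := by rw [← htot]; exact hfin
  have hXfin : ∀ n j : ℕ, X12 p τ n j ≠ ⊤ := by
    intro n j
    refine ne_top_of_le_ne_top hLfin ?_
    calc X12 p τ n j ≤ ∑' j : ℕ, X12 p τ n j := ENNReal.le_tsum j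
      _ ≤ L := by rw [hL]; exact ENNReal.le_tsum n
  have hYfin : ∀ k : ℕ, (∑' j : ℕ, X12 p τ (k + 2 * j) j) ≠ ⊤ := by
    intro k
    refine ne_top_of_le_ne_top hLfin ?_
    calc ∑' j : ℕ, X12 p τ (k + 2 * j) j
        ≤ ∑' j : ℕ, ∑' n : ℕ, X12 p τ n j :=
          ENNReal.tsum_le_tsum fun j => ENNReal.le_tsum _
      _ = L := by rw [hL]; exact ENNReal.tsum_comm
  have hAp : ∀ k : ℕ, Ap p τ k = (∑' j : ℕ, X12 p τ (k + 2 * j) j).toReal := by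
    intro k
    unfold Ap
    rw [ENNReal.tsum_toReal_eq (fun j => hXfin _ j)]
    exact tsum_congr fun j => Ap_term hp2 k j
  calc Ep p τ = L.toReal := by rw [Ep_eq_toReal hm, htot]
    _ = (∑' k : ℕ, ∑' j : ℕ, X12 p τ (k + 2 * j) j).toReal := by
        rw [hL, reindex12 hp2 hτ0 hτ1 hgap h1 h2]
    _ = ∑' k : ℕ, (∑' j : ℕ, X12 p τ (k + 2 * j) j).toReal :=
        ENNReal.tsum_toReal_eq hYfin
    _ = ∑' k : ℕ, Ap p τ k := tsum_congr fun k => (hAp k).symm
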